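/- For a ≥ 2 and n ≥ 1 with n = 1 or n even, the sequence (S_n(m) mod 2^a)_{m≥1} is periodic with exact period 2^(a+1); that is, S_n(m + 2^(a+1)) ≡ S_n(m) (mod 2^a) for all m ≥ 1, and no smaller positive period works. -/

import Mathlib

def S (n m : ℕ) : ℕ := ∑ i ∈ Finset.Icc 1 m, i ^ n

open Finset

lemma pow_add_sq_zero {R : Type*} [CommRing R] (x y : R) (hy : y * y = 0) :
    ∀ n : ℕ, (x + y) ^ n = x ^ n + n * x ^ (n - 1) * y
  | 0 => by simp
  | 1 => by simp
  | (n+2) => by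
    have hy2 : y ^ 2 = 0 := by rw [sq]; exact hy
    have ih := pow_add_sq_zero x y hy (n+1)
    have h3 : (x + y) ^ (n + 2) = (x + y) ^ (n+1) * (x + y) := by ring
    rw [h3, ih]
    have h1 : (n+1 : ℕ) - 1 = n := rfl
    have h2 : (n+2 : ℕ) - 1 = n + 1 := rfl
    rw [h1, h2]
    push_cast
    ring_nf
    simp [hy2]

lemma sum_range_zmod {M : Type*} [AddCommMonoid M] (N : ℕ) [NeZero N] (f : ZMod N → M) :
    ∑ j ∈ Finset.range N, f (j : ZMod N) = ∑ x : ZMod N, f x := by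
  refine Finset.sum_nbij' (fun j => ((j : ZMod N))) (fun x => x.val) ?_ ?_ ?_ ?_ ?_
  · intro a _; exact Finset.mem_univ _
  · intro x _; exact Finset.mem_range.mpr x.val_lt
  · intro a ha; exact ZMod.val_cast_of_lt (Finset.mem_range.mp ha)
  · intro x _; simp [ZMod.natCast_val, ZMod.cast_id]
  · intro a _; rfl

lemma window_sum (N : ℕ) [NeZero N] (c n : ℕ) :
    (∑ j ∈ Finset.range N, (c + j) ^ n : ℕ) ≡ (∑ j ∈ Finset.range N, j ^ n) [MOD N] := by
  rw [← ZMod.natCast_eq_natCast_iff]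
  push_cast
  have h1 : ∑ j ∈ Finset.range N, ((c : ZMod N) + (j : ℕ)) ^ n
      = ∑ x : ZMod N, ((c : ZMod N) + x) ^ n := sum_range_zmod N (fun x => ((c : ZMod N) + x) ^ n)
  have h2 : ∑ j ∈ Finset.range N, ((j : ℕ) : ZMod N) ^ n
      = ∑ x : ZMod N, x ^ n := sum_range_zmod N (fun x => x ^ n)
  rw [h1, h2]
  exact Fintype.sum_equiv (Equiv.addLeft (c : ZMod N)) _ _ (fun x => rfl)

lemma T_key (n : ℕ) (hn : 1 ≤ n) (h : n = 1 ∨ Even n) :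
    ∀ a : ℕ, 1 ≤ a → (∑ i ∈ Finset.range (2 ^ a), i ^ n) ≡ 2 ^ (a - 1) [MOD 2 ^ a]
  | 0, ha => by omega
  | 1, _ => by
      have h1 : (∑ i ∈ Finset.range (2 ^ 1), i ^ n) = 1 := by
        simp [Finset.sum_range_succ, Nat.zero_pow hn]
      rw [h1]
      decide
  | (b+2), _ => by
      have hb' : 1 ≤ b + 1 := by omega
      have IH := T_key n hn h (b+1) hb'
      set B := b + 1 with hB
      have hsplit : (∑ i ∈ Finset.range (2 ^ (B+1)), i ^ n)
          = (∑ i ∈ Finset.range (2 ^ B), i ^ n) + ∑ j ∈ Finset.range (2 ^ B), (2 ^ B + j) ^ n := by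
        have h2 : 2 ^ (B+1) = 2 ^ B + 2 ^ B := by ring
        rw [h2, Finset.sum_range_add]
      set N := 2 ^ (B+1) with hN
      haveI : NeZero N := ⟨by positivity⟩
      set R := ZMod N with hR
      set c : R := ((2 ^ B : ℕ) : R) with hcdef
      have hc : c * c = 0 := by
        rw [hcdef, ← Nat.cast_mul, ZMod.natCast_eq_zero_iff]
        rw [← pow_add, hN]
        exact pow_dvd_pow 2 (by omega)
      have hterm : ∀ j : ℕ, (c + (j : R)) ^ n = (j:R) ^ n + n * (j:R) ^ (n-1) * c := by
        intro j
        rw [add_comm c ((j:R))]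
        exact pow_add_sq_zero (j : R) c hc n
      have key : ((∑ i ∈ Finset.range (2 ^ (B+1)), i ^ n : ℕ) : R)
          = 2 * ((∑ i ∈ Finset.range (2 ^ B), i ^ n : ℕ) : R) := by
        rw [hsplit]
        push_cast +zetaDelta
        have hcast : (2:R) ^ B = c := by rw [hcdef]; push_cast; ring
        rw [hcast]
        have hrw : ∑ j ∈ Finset.range (2 ^ B), (c + (j:R)) ^ n
            = ∑ j ∈ Finset.range (2 ^ B), ((j:R) ^ n + n * (j:R) ^ (n-1) * c) :=
          Finset.sum_congr rfl (fun j _ => hterm j)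
        rw [hrw, Finset.sum_add_distrib]
        have hfactor : ∑ j ∈ Finset.range (2 ^ B), ((n:R) * (j:R) ^ (n-1) * c)
            = (n:R) * c * ∑ j ∈ Finset.range (2 ^ B), (j:R) ^ (n-1) := by
          rw [Finset.mul_sum]; apply Finset.sum_congr rfl; intros; ring
        have hzero : (n:R) * c * ∑ j ∈ Finset.range (2 ^ B), (j:R) ^ (n-1) = 0 := by
          rcases h with h1 | h2
          · subst h1
            simp only [Nat.sub_self, pow_zero, Nat.cast_one, one_mul]
            rw [Finset.sum_const, Finset.card_range, nsmul_eq_mul, mul_one]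
            have : ((2 ^ B : ℕ) : R) = c := rfl
            rw [← this] at hc
            rw [← this]
            exact hc
          · obtain ⟨k, hk⟩ := h2
            have hnc : (n : R) * c = 0 := by
              rw [hcdef, ← Nat.cast_mul, ZMod.natCast_eq_zero_iff, hN]
              exact ⟨k, by rw [hk]; ring⟩
            rw [hnc, zero_mul]
        rw [hfactor, hzero, add_zero]
        ring
      have hmod : (∑ i ∈ Finset.range (2 ^ (B+1)), i ^ n)
          ≡ 2 * (∑ i ∈ Finset.range (2 ^ B), i ^ n) [MOD 2 ^ (B+1)] := by
        rw [← ZMod.natCast_eq_natCast_iff]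
        push_cast
        push_cast +zetaDelta at key
        rw [← hN] at *
        exact key
      have hmul := Nat.ModEq.mul_left' 2 IH
      have e1 : 2 * 2 ^ B = 2 ^ (B+1) := by ring
      have e2 : 2 * 2 ^ (B-1) = 2 ^ B := by
        have hB1 : B - 1 + 1 = B := by omega
        calc 2 * 2 ^ (B-1) = 2 ^ (B-1+1) := by ring
          _ = 2 ^ B := by rw [hB1]
      rw [e1, e2] at hmul
      exact hmod.trans hmul

lemma S_split (n m k : ℕ) : S n (m + k) = S n m + ∑ j ∈ Finset.range k, (m + 1 + j) ^ n := by
  unfold S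
  rw [← Finset.Ico_add_one_right_eq_Icc 1 (m+k), ← Finset.Ico_add_one_right_eq_Icc 1 m]
  rw [← Finset.sum_Ico_consecutive (fun i => i ^ n) (by omega : 1 ≤ m + 1)
    (by omega : m + 1 ≤ m + k + 1)]
  congr 1
  rw [Finset.sum_Ico_eq_sum_range]
  have hd : m + k + 1 - (m + 1) = k := by omega
  rw [hd]

theorem stmt12 (a n : ℕ) (ha : 2 ≤ a) (hn : 1 ≤ n) (h : n = 1 ∨ Even n) :
    (∀ m, 1 ≤ m → S n (m + 2 ^ (a + 1)) ≡ S n m [MOD 2 ^ a]) ∧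
    ∀ d, 0 < d → d < 2 ^ (a + 1) →
      ¬ (∀ m, 1 ≤ m → S n (m + d) ≡ S n m [MOD 2 ^ a]) := by
  have ha1 : 1 ≤ a := by omega
  haveI : NeZero (2 ^ a) := ⟨by positivity⟩
  have hT := T_key n hn h a ha1
  -- any window of length 2^a is ≡ 2^(a-1) mod 2^a
  have hwin : ∀ c : ℕ, (∑ j ∈ Finset.range (2 ^ a), (c + j) ^ n) ≡ 2 ^ (a-1) [MOD 2 ^ a] :=
    fun c => (window_sum (2 ^ a) c n).trans hT
  -- part 1
  have hpos : ∀ m, 1 ≤ m → S n (m + 2 ^ (a + 1)) ≡ S n m [MOD 2 ^ a] := by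
    intro m _
    rw [S_split n m (2 ^ (a+1))]
    have hsplit : (∑ j ∈ Finset.range (2 ^ (a+1)), (m + 1 + j) ^ n)
        = (∑ j ∈ Finset.range (2 ^ a), (m + 1 + j) ^ n)
          + ∑ j ∈ Finset.range (2 ^ a), (m + 1 + 2 ^ a + j) ^ n := by
      have h2 : 2 ^ (a+1) = 2 ^ a + 2 ^ a := by ring
      rw [h2, Finset.sum_range_add]
      congr 1
      apply Finset.sum_congr rfl
      intro j _
      congr 1
      omega
    rw [hsplit]
    have hW : (∑ j ∈ Finset.range (2 ^ a), (m + 1 + j) ^ n)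
        + (∑ j ∈ Finset.range (2 ^ a), (m + 1 + 2 ^ a + j) ^ n) ≡ 0 [MOD 2 ^ a] := by
      have h1 := hwin (m+1)
      have h2 := hwin (m+1+2^a)
      have h3 := h1.add h2
      have h4 : 2 ^ (a-1) + 2 ^ (a-1) = 2 ^ a := by
        have : a - 1 + 1 = a := by omega
        calc 2 ^ (a-1) + 2 ^ (a-1) = 2 ^ (a-1+1) := by ring
          _ = 2 ^ a := by rw [this]
      rw [h4] at h3
      exact h3.trans (Nat.modEq_zero_iff_dvd.mpr dvd_rfl)
    have := (Nat.ModEq.refl (S n m)).add hW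
    rw [add_zero] at this
    exact this
  refine ⟨hpos, ?_⟩
  intro d hd0 hdlt hper
  -- iteration
  have hiter : ∀ (e : ℕ), (∀ m, 1 ≤ m → S n (m + e) ≡ S n m [MOD 2 ^ a]) →
      ∀ (x m : ℕ), 1 ≤ m → S n (m + x * e) ≡ S n m [MOD 2 ^ a] := by
    intro e he x
    induction x with
    | zero => intro m hm; simpa using Nat.ModEq.refl (S n m)
    | succ x ih =>
      intro m hm
      have h1 : m + (x+1) * e = (m + x * e) + e := by ring
      rw [h1]
      exact (he (m + x * e) (by omega)).trans (ih m hm)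
  -- Bezout: find x y with x*d = 2^a + 2^(a+1)*y
  set N := 2 ^ (a+1) with hNdef
  have hNpos : 0 < N := by positivity
  have h2aN : 2 ^ a < N := by
    rw [hNdef]; exact Nat.pow_lt_pow_right one_lt_two (by omega)
  set g := Nat.gcd d N with hgdef
  have hgdvd : g ∣ N := Nat.gcd_dvd_right _ _
  obtain ⟨i, hi, hgi⟩ := (Nat.dvd_prime_pow Nat.prime_two).mp hgdvd
  have hgle : g ≤ d := Nat.le_of_dvd hd0 (Nat.gcd_dvd_left _ _)
  have hia : i ≤ a := by
    by_contra hcon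
    have : i = a + 1 := by omega
    rw [this] at hgi
    omega
  have hg2a : g ∣ 2 ^ a := by rw [hgi]; exact pow_dvd_pow 2 hia
  set t := 2 ^ a / g with htdef
  have hgt : g * t = 2 ^ a := Nat.mul_div_cancel' hg2a
  set X := Nat.gcdA d N with hXdef
  set Y := Nat.gcdB d N with hYdef
  have hbez : (g : ℤ) = d * X + N * Y := Nat.gcd_eq_gcd_ab d N
  have hNZ : (N : ℤ) ≠ 0 := by positivity
  set x : ℕ := ((X * t) % (N : ℤ)).toNat with hxdef
  have hx : (x : ℤ) = (X * (t:ℤ)) % (N : ℤ) :=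
    Int.toNat_of_nonneg (Int.emod_nonneg _ hNZ)
  have hxd : (N : ℤ) ∣ (2 ^ a : ℤ) - (x : ℤ) * d := by
    have hmoddef : (X * (t:ℤ)) % (N:ℤ) = X * t - N * ((X * t) / N) := by
      rw [Int.emod_def]
    have hxeq : (x : ℤ) = X * t - N * ((X * (t:ℤ)) / N) := by rw [hx, hmoddef]
    have h2at : (2 ^ a : ℤ) = (g : ℤ) * t := by
      rw [← Nat.cast_mul, hgt]; push_cast; ring
    refine ⟨(t : ℤ) * Y + ((X * (t:ℤ)) / N) * d, ?_⟩
    rw [hxeq, h2at, hbez]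
    ring
  have hmd : x * d ≡ 2 ^ a [MOD N] := by
    rw [Nat.modEq_iff_dvd]
    push_cast
    exact_mod_cast hxd
  have hle : 2 ^ a ≤ x * d := by
    have h1 : x * d % N = 2 ^ a % N := hmd
    have h2 : 2 ^ a % N = 2 ^ a := Nat.mod_eq_of_lt h2aN
    have h3 := Nat.mod_le (x * d) N
    omega
  obtain ⟨y, hy⟩ := (Nat.modEq_iff_dvd' hle).mp hmd.symm
  have heq : x * d = 2 ^ a + N * y := by omega
  -- so 2^a is a period
  have h2aper : ∀ m, 1 ≤ m → S n (m + 2 ^ a) ≡ S n m [MOD 2 ^ a] := by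
    intro m hm
    have h1 : S n (m + x * d) ≡ S n m [MOD 2 ^ a] := hiter d hper x m hm
    have h2 : S n ((m + 2 ^ a) + y * N) ≡ S n (m + 2 ^ a) [MOD 2 ^ a] :=
      hiter N hpos y (m + 2 ^ a) (by omega)
    have h3 : (m + 2 ^ a) + y * N = m + x * d := by rw [heq]; ring
    rw [h3] at h2
    exact h2.symm.trans h1
  -- contradiction at m = 1
  have hcontr := h2aper 1 le_rfl
  rw [S_split n 1 (2 ^ a)] at hcontr
  have hWz : (∑ j ∈ Finset.range (2 ^ a), (1 + 1 + j) ^ n) ≡ 0 [MOD 2 ^ a] :=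
    Nat.ModEq.add_left_cancel' (S n 1) (by rw [add_zero]; exact hcontr)
  have hW2 : (2 : ℕ) ^ (a-1) ≡ 0 [MOD 2 ^ a] := (hwin 2).symm.trans hWz
  have hdvd : 2 ^ a ∣ 2 ^ (a-1) := (Nat.modEq_zero_iff_dvd).mp hW2
  have hlt : (2:ℕ) ^ (a-1) < 2 ^ a := Nat.pow_lt_pow_right one_lt_two (by omega)
  have := Nat.le_of_dvd (by positivity) hdvd
  omega
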